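/- For all positive real numbers a, b with a ≠ b, the quantity (T(a,b) − A(a,b))/(C(a,b) − A(a,b)) lies strictly between 4/π − 1 and 1/3. -/

import Mathlib

open Real

/-- The Seiffert mean of two positive reals. -/
noncomputable def seiffertT (a b : ℝ) : ℝ := (a - b) / (2 * Real.arctan ((a - b) / (a + b)))

/-- The arithmetic mean of two positive reals. -/
noncomputable def arithMean (a b : ℝ) : ℝ := (a + b) / 2

/-- The contra-harmonic mean of two positive reals. -/
noncomputable def contraharmonicMean (a b : ℝ) : ℝ := (a ^ 2 + b ^ 2) / (a + b)

open Set

lemma arctan_pos' {x : ℝ} (hx : 0 < x) : 0 < arctan x := by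
  simpa using arctan_strictMono hx

lemma one_add_sq_pos (x : ℝ) : (0:ℝ) < 1 + x^2 := by positivity

/-- derivative helper for x/(1+x^2) -/
lemma hasDerivAt_aux1 (x : ℝ) : HasDerivAt (fun y : ℝ => y/(1+y^2)) ((1-x^2)/(1+x^2)^2) x := by
  have h := (hasDerivAt_id x).div ((hasDerivAt_const x (1:ℝ)).add ((hasDerivAt_pow 2 x)))
    (one_add_sq_pos x).ne'
  convert h using 1 <;> try rfl
  simp only [Pi.add_apply, id]
  field_simp
  ring

/-- arctan x > x/(1+x²) for x > 0 -/
lemma arctan_gt_aux {x : ℝ} (hx : 0 < x) : x/(1+x^2) < arctan x := by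
  set φ : ℝ → ℝ := fun y => arctan y - y/(1+y^2) with hφ
  have hd : ∀ y : ℝ, HasDerivAt φ (2*y^2/(1+y^2)^2) y := by
    intro y
    have := (Real.hasDerivAt_arctan y).sub (hasDerivAt_aux1 y)
    convert this using 1 <;> try rfl
    rw [div_sub_div _ _ (one_add_sq_pos y).ne' (by positivity)]
    field_simp
    ring
  have hmono : StrictMonoOn φ (Ici (0:ℝ)) := by
    apply strictMonoOn_of_deriv_pos (convex_Ici 0)
      (fun y _ => ((hd y).differentiableAt).continuousAt.continuousWithinAt)
    intro y hy
    rw [interior_Ici] at hy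
    rw [(hd y).deriv]
    have hy' : y ≠ 0 := ne_of_gt hy
    positivity
  have := hmono (by simp : (0:ℝ) ∈ Ici 0) (by simp [hx.le] : x ∈ Ici 0) hx
  simpa [hφ] using this

/-- 3t < arctan t * (3 + t²) for t > 0 -/
lemma upper_key {x : ℝ} (hx : 0 < x) : 3*x < arctan x * (3 + x^2) := by
  set g : ℝ → ℝ := fun y => arctan y * (3+y^2) - 3*y with hg
  have hd : ∀ y : ℝ, HasDerivAt g (2*y*(arctan y - y/(1+y^2))) y := by
    intro y
    have := ((Real.hasDerivAt_arctan y).mul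
      ((hasDerivAt_const y (3:ℝ)).add (hasDerivAt_pow 2 y))).sub
      ((hasDerivAt_const y (3:ℝ)).mul (hasDerivAt_id y))
    convert this using 1 <;> try rfl
    simp only [Pi.add_apply, Pi.mul_apply, id]
    field_simp
    ring
  have hmono : StrictMonoOn g (Ici (0:ℝ)) := by
    apply strictMonoOn_of_deriv_pos (convex_Ici 0)
      (fun y _ => ((hd y).differentiableAt).continuousAt.continuousWithinAt)
    intro y hy
    rw [interior_Ici] at hy
    rw [(hd y).deriv]
    have h1 := arctan_gt_aux hy
    have : (0:ℝ) < 2*y := by linarith [hy.out]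
    nlinarith [h1, hy.out]
  have := hmono (by simp : (0:ℝ) ∈ Ici 0) (by simp [hx.le] : x ∈ Ici 0) hx
  simp only [hg, Real.arctan_zero] at this
  nlinarith [this]

noncomputable def psiF (y : ℝ) : ℝ := (2*π-4) * (y/(1+y^2)) - 2*(4-π) * arctan y

lemma hasDerivAt_psiF (y : ℝ) :
    HasDerivAt psiF ((4*π-12-4*y^2)/(1+y^2)^2) y := by
  have h := ((hasDerivAt_aux1 y).const_mul (2*π-4)).sub
    ((Real.hasDerivAt_arctan y).const_mul (2*(4-π)))
  convert h using 1 <;> try rfl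
  field_simp
  ring

lemma psiF_mono : StrictMonoOn psiF (Icc 0 (Real.sqrt (π-3))) := by
  apply strictMonoOn_of_deriv_pos (convex_Icc _ _)
    (fun y _ => ((hasDerivAt_psiF y).differentiableAt).continuousAt.continuousWithinAt)
  intro y hy
  rw [interior_Icc] at hy
  rw [(hasDerivAt_psiF y).deriv]
  have h1 : y^2 < π - 3 := by
    have := (Real.lt_sqrt hy.1.le).1 hy.2
    linarith
  have h2 : (0:ℝ) < (1+y^2)^2 := by positivity
  apply div_pos (by linarith) h2

lemma psiF_anti : StrictAntiOn psiF (Icc (Real.sqrt (π-3)) 1) := by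
  apply strictAntiOn_of_deriv_neg (convex_Icc _ _)
    (fun y _ => ((hasDerivAt_psiF y).differentiableAt).continuousAt.continuousWithinAt)
  intro y hy
  rw [interior_Icc] at hy
  rw [(hasDerivAt_psiF y).deriv]
  have hs : Real.sqrt (π-3) ^ 2 = π - 3 := Real.sq_sqrt (by linarith [Real.pi_gt_three])
  have h0 : (0:ℝ) ≤ Real.sqrt (π-3) := Real.sqrt_nonneg _
  have h1 : π - 3 < y^2 := by nlinarith [hy.1]
  have h2 : (0:ℝ) < (1+y^2)^2 := by positivity
  apply div_neg_of_neg_of_pos (by linarith) h2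

lemma sqrt_pi3_lt_one : Real.sqrt (π-3) < 1 := by
  have h4 : π < 4 := by linarith [Real.pi_lt_d2]
  nlinarith [Real.sq_sqrt (by linarith [Real.pi_gt_three] : (0:ℝ) ≤ π - 3),
    Real.sqrt_nonneg (π-3)]

lemma psiF_zero : psiF 0 = 0 := by simp [psiF]

lemma psiF_one_neg : psiF 1 < 0 := by
  simp only [psiF, Real.arctan_one]
  nlinarith [Real.pi_gt_d6, Real.pi_lt_d2]

noncomputable def hF (y : ℝ) : ℝ := π*y - arctan y * (π + (4-π)*y^2)

lemma hasDerivAt_hF (y : ℝ) : HasDerivAt hF (y * psiF y) y := by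
  have h := ((hasDerivAt_const y π).mul (hasDerivAt_id y)).sub
    ((Real.hasDerivAt_arctan y).mul
      ((hasDerivAt_const y (π:ℝ)).add ((hasDerivAt_pow 2 y).const_mul (4-π))))
  convert h using 1 <;> try rfl
  simp only [Pi.add_apply, Pi.mul_apply, id]
  simp only [psiF]
  field_simp
  ring

lemma hF_one : hF 1 = 0 := by
  simp [hF, Real.arctan_one]

lemma psiF_pos_of {y : ℝ} (h0 : 0 < y) (hy : y ≤ Real.sqrt (π-3)) : 0 < psiF y := by
  have := psiF_mono (by constructor <;> [rfl; exact Real.sqrt_nonneg _] : (0:ℝ) ∈ Icc 0 (Real.sqrt (π-3)))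
    (by exact ⟨h0.le, hy⟩) h0
  rwa [psiF_zero] at this

/-- the key lower bound: for 0 < x < 1, arctan x * (π + (4-π)x²) < π x -/
lemma lower_key {x : ℝ} (h0 : 0 < x) (h1 : x < 1) : arctan x * (π + (4-π)*x^2) < π * x := by
  have hs0 : (0:ℝ) ≤ Real.sqrt (π-3) := Real.sqrt_nonneg _
  have hs1 : Real.sqrt (π-3) < 1 := sqrt_pi3_lt_one
  have key : 0 < hF x := by
    by_cases hψ : 0 ≤ psiF x
    · -- h strictly increasing on [0, x]
      have hmono : StrictMonoOn hF (Icc 0 x) := by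
        apply strictMonoOn_of_deriv_pos (convex_Icc _ _)
          (fun y _ => ((hasDerivAt_hF y).differentiableAt).continuousAt.continuousWithinAt)
        intro y hy
        rw [interior_Icc] at hy
        rw [(hasDerivAt_hF y).deriv]
        have hψy : 0 < psiF y := by
          rcases le_or_gt y (Real.sqrt (π-3)) with hc | hc
          · exact psiF_pos_of hy.1 hc
          · -- sqrt(π-3) < y < x ≤ 1, use anti
            have := psiF_anti (⟨hc.le, by linarith [hy.2]⟩ : y ∈ Icc (Real.sqrt (π-3)) 1)
              (⟨by linarith [hc, hy.2], h1.le⟩ : x ∈ Icc (Real.sqrt (π-3)) 1) hy.2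
            linarith
        exact mul_pos hy.1 hψy
      have := hmono (⟨le_refl 0, h0.le⟩ : (0:ℝ) ∈ Icc 0 x) (⟨h0.le, le_refl x⟩) h0
      simpa [hF, Real.arctan_zero] using this
    · push_neg at hψ
      -- x > sqrt(π-3) necessarily
      have hxs : Real.sqrt (π-3) < x := by
        by_contra hc
        push_neg at hc
        exact absurd (psiF_pos_of h0 hc) (by linarith)
      have hanti : StrictAntiOn hF (Icc x 1) := by
        apply strictAntiOn_of_deriv_neg (convex_Icc _ _)
          (fun y _ => ((hasDerivAt_hF y).differentiableAt).continuousAt.continuousWithinAt)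
        intro y hy
        rw [interior_Icc] at hy
        rw [(hasDerivAt_hF y).deriv]
        have hψy : psiF y < 0 := by
          have := psiF_anti (⟨hxs.le, (by linarith [hy.2] : x ≤ 1)⟩ : x ∈ Icc (Real.sqrt (π-3)) 1)
            (⟨by linarith [hy.1], hy.2.le⟩ : y ∈ Icc (Real.sqrt (π-3)) 1) hy.1
          linarith
        exact mul_neg_of_pos_of_neg (by linarith [hy.1]) hψy
      have := hanti (⟨le_refl x, h1.le⟩ : x ∈ Icc x 1) (⟨h1.le, le_refl 1⟩) h1
      rw [hF_one] at this
      linarith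
  simp only [hF] at key
  linarith

lemma ratio_key {x : ℝ} (h0 : 0 < x) (h1 : x < 1) :
    4/π - 1 < (x - arctan x)/(x^2 * arctan x) ∧ (x - arctan x)/(x^2 * arctan x) < 1/3 := by
  have ha : 0 < arctan x := arctan_pos' h0
  have hπ : (0:ℝ) < π := Real.pi_pos
  have hden : 0 < x^2 * arctan x := by positivity
  constructor
  · have hk := lower_key h0 h1
    rw [lt_div_iff₀ hden]
    have h4 : (4/π - 1) * (x^2 * arctan x) = ((4-π) * (x^2 * arctan x))/π := by
      field_simp
    rw [h4, div_lt_iff₀ hπ]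
    nlinarith [hk]
  · rw [div_lt_iff₀ hden]
    have := upper_key h0
    nlinarith [this]

lemma seiffert_symm (a b : ℝ) : seiffertT a b = seiffertT b a := by
  unfold seiffertT
  rw [show (b-a)/(b+a) = -((a-b)/(a+b)) by ring, Real.arctan_neg]
  ring

lemma reduce (a b : ℝ) (hb : 0 < b) (hba : b < a) :
    (seiffertT a b - arithMean a b) / (contraharmonicMean a b - arithMean a b)
      = (((a-b)/(a+b)) - arctan ((a-b)/(a+b)))/(((a-b)/(a+b))^2 * arctan ((a-b)/(a+b))) := by
  have hs : (0:ℝ) < a + b := by linarith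
  have hd : (0:ℝ) < a - b := by linarith
  have harc : 0 < arctan ((a-b)/(a+b)) := arctan_pos' (div_pos hd hs)
  unfold seiffertT arithMean contraharmonicMean
  rw [div_eq_div_iff]
  · field_simp
    ring
  · -- contraharmonic - arith ≠ 0
    have : (a^2+b^2)/(a+b) - (a+b)/2 = (a-b)^2/(2*(a+b)) := by field_simp; ring
    rw [this]
    positivity
  · positivity

theorem stmt_17 (a b : ℝ) (ha : 0 < a) (hb : 0 < b) (hab : a ≠ b) :
    4 / π - 1 < (seiffertT a b - arithMean a b) / (contraharmonicMean a b - arithMean a b) ∧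
      (seiffertT a b - arithMean a b) / (contraharmonicMean a b - arithMean a b) < 1 / 3 := by
  wlog hba : b < a with H
  · push_neg at hba
    have hab' : a < b := lt_of_le_of_ne hba hab
    have := H b a hb ha (Ne.symm hab) hab'
    rwa [seiffert_symm b a, show arithMean b a = arithMean a b by unfold arithMean; ring_nf,
      show contraharmonicMean b a = contraharmonicMean a b by unfold contraharmonicMean; ring_nf] at this
  have hs : (0:ℝ) < a + b := by linarith
  have hd : (0:ℝ) < a - b := by linarith
  have h0 : 0 < (a-b)/(a+b) := div_pos hd hs
  have h1 : (a-b)/(a+b) < 1 := (div_lt_one hs).2 (by linarith)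
  rw [reduce a b hb hba]
  exact ratio_key h0 h1
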